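/- Let d,k ≥ 1 be integers and c = (k−1)d+k²+2. Let (G,s_1,t_1,…,s_k,t_k) be a problem instance where G is a d-path-dominant digraph, let x be a key quality, and let L=(P_1,…,P_k) be an x-linkage for (G,s_1,t_1,…,s_k,t_k). Let B ⊆ V(L) be acceptable for L, let A = V(G)∖B, let 1 ≤ h,i ≤ k, let Q be a subpath of P_h|B with cd vertices and R a subpath of P_i|A with cd vertices, and let X be the set of all vertices of G that are both Q-outward and R-inward. Then |X∖V(L)| ≤ c−1, |X∩V(P_g|B)| ≤ c−1 and |X∩V(P_g|A)| ≤ c−1 for each g with 1 ≤ g ≤ k; consequently |X| ≤ (2k+1)(c−1). -/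

import Mathlib

open List

/-! Basic digraph/path definitions.  A digraph on `V` is a relation `G : V → V → Prop`
(looplessness is expressed by `Irreflexive G`).  A (directed) path is a nonempty list of
distinct vertices in which consecutive vertices are joined by edges of `G`. -/

/-- `uv` is an edge of the path `P`, i.e. `u,v` are consecutive on `P`. -/
def PEdge {V : Type} (P : List V) (u v : V) : Prop := [u, v] <:+: P

/-- `P` is a directed path of the digraph `G`. -/
def IsPath {V : Type} (G : V → V → Prop) (P : List V) : Prop :=
  P ≠ [] ∧ P.Nodup ∧ P.Chain' G

/-- `P` is a minimal path of `G`: for every edge `v_i v_j` of `G` between vertices of `P`,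
`j ≤ i + 1`. -/
def IsMinimal {V : Type} (G : V → V → Prop) (P : List V) : Prop :=
  ∀ i j : Fin P.length, G (P.get i) (P.get j) → (j : ℕ) ≤ (i : ℕ) + 1

/-- `G` is `d`-path-dominant. -/
def PathDominant {V : Type} (d : ℕ) (G : V → V → Prop) : Prop :=
  ∀ P : List V, IsPath G P → IsMinimal G P → P.length = d →
    ∀ v : V, v ∈ P ∨ (∃ w ∈ P, G v w) ∨ (∃ w ∈ P, G w v)

/-- A linkage: a tuple of pairwise vertex-disjoint paths. -/
def IsLinkage {V : Type} (G : V → V → Prop) {k : ℕ} (L : Fin k → List V) : Prop :=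
  (∀ i, IsPath G (L i)) ∧ ∀ i j : Fin k, i ≠ j → ∀ v, v ∈ L i → v ∉ L j

/-- `v` is `Q`-outward: `v ∉ Q` and no vertex of `Q` is adjacent from `v`. -/
def Outward {V : Type} (G : V → V → Prop) (Q : List V) (v : V) : Prop :=
  v ∉ Q ∧ ∀ w ∈ Q, ¬ G v w

/-- `v` is `Q`-inward: `v ∉ Q` and no vertex of `Q` is adjacent to `v`. -/
def Inward {V : Type} (G : V → V → Prop) (Q : List V) (v : V) : Prop :=
  v ∉ Q ∧ ∀ w ∈ Q, ¬ G w v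

section Inhab
variable {V : Type} [Inhabited V]

/-- A linkage for the problem instance `(G, s₁, t₁, …, s_k, t_k)`. -/
def IsLinkageFor (G : V → V → Prop) {k : ℕ} (s t : Fin k → V) (L : Fin k → List V) : Prop :=
  IsLinkage G L ∧ ∀ i, (L i).head! = s i ∧ (L i).getLast! = t i

/-- `x` is a quality: there is an `x`-linkage for the instance. -/
def IsQuality (G : V → V → Prop) {k : ℕ} (s t : Fin k → V) (x : Fin k → ℕ) : Prop :=
  ∃ L : Fin k → List V, IsLinkageFor G s t L ∧ ∀ i, (L i).length = x i

/-- `x` is a key quality: a quality not strictly dominating any other quality. -/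
def IsKeyQuality (G : V → V → Prop) {k : ℕ} (s t : Fin k → V) (x : Fin k → ℕ) : Prop :=
  IsQuality G s t x ∧ ¬ ∃ y : Fin k → ℕ, IsQuality G s t y ∧ y ≤ x ∧ y ≠ x

/-- `v` is an internal vertex of the linkage `M`. -/
def Internal {k : ℕ} (M : Fin k → List V) (v : V) : Prop :=
  (∃ i, v ∈ M i) ∧ ∀ i, v ≠ (M i).head! ∧ v ≠ (M i).getLast!

/-- The linkage `M` is internally disjoint from the linkage `L`. -/
def InternallyDisjointFrom {k l : ℕ} (M : Fin k → List V) (L : Fin l → List V) : Prop :=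
  ∀ v, Internal M v → ∀ i, v ∉ L i

/-- A planar `(Q,R)`-matching of cardinality `n`. -/
def IsPlanarMatching (G : V → V → Prop) (Q R : List V) {n : ℕ} (M : Fin n → List V) : Prop :=
  IsLinkage G M ∧ (∀ j, (M j).length = 2 ∨ (M j).length = 3) ∧
  (List.ofFn fun j => (M j).head!).Sublist Q ∧
  (List.ofFn fun j => (M j).getLast!).Sublist R

/-- A planar `(Q,R)`-matching is `s`-spaced. -/
def SSpaced (Q R : List V) {n : ℕ} (M : Fin n → List V) (s : ℕ) : Prop :=
  (∀ W : List V, W <:+: Q → W.length ≤ s →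
    ∀ j j' : Fin n, (∃ v ∈ W, v ∈ M j) → (∃ v ∈ W, v ∈ M j') → j = j') ∧
  (∀ W : List V, W <:+: R → W.length ≤ s →
    ∀ j j' : Fin n, (∃ v ∈ W, v ∈ M j) → (∃ v ∈ W, v ∈ M j') → j = j')

/-- `A(L)`: vertices outside `V(L)` that are `(M_j ∖ t(M_j))`-inward for some `j`
with `t(M_j) ≠ t_j`. -/
def RailA (G : V → V → Prop) {k : ℕ} (t : Fin k → V) (L : Fin k → List V) : Set V :=
  {v | (∀ i, v ∉ L i) ∧ ∃ j, (L j).getLast! ≠ t j ∧ ∀ w ∈ (L j).dropLast, ¬ G w v}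

/-- `B(L)`: vertices outside `V(L)` that are `(M_j ∖ s(M_j))`-outward for some `j`
with `s(M_j) ≠ s_j`. -/
def RailB (G : V → V → Prop) {k : ℕ} (s : Fin k → V) (L : Fin k → List V) : Set V :=
  {v | (∀ i, v ∉ L i) ∧ ∃ j, (L j).head! ≠ s j ∧ ∀ w ∈ (L j).tail, ¬ G v w}

/-- The confusion of the linkage `L`, namely `|A(L) ∩ B(L)|`. -/
noncomputable def Confusion (G : V → V → Prop) {k : ℕ} (s t : Fin k → V)
    (L : Fin k → List V) : ℕ :=
  (RailA G t L ∩ RailB G s L).ncard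

/-- `(L, X, Y)` is a `(k,m,c)`-rail in the problem instance. -/
def IsRail (G : V → V → Prop) {k : ℕ} (s t : Fin k → V) (m c : ℕ)
    (L : Fin k → List V) (X Y : Set V) : Prop :=
  IsLinkage G L ∧
  (∀ j, (L j).length ≤ 2*m ∧
    ((L j).length < 2*m → (L j).head! = s j ∨ (L j).getLast! = t j)) ∧
  Confusion G s t L ≤ c ∧
  Disjoint X Y ∧
  X ⊆ RailA G t L ∧ Y ⊆ RailB G s L ∧ X ∪ Y = RailA G t L ∪ RailB G s L

end Inhab

/-- The data of a potential rail: a `k`-tuple of paths together with two vertex sets. -/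
abbrev RailT (V : Type) (k : ℕ) := (Fin k → List V) × Set V × Set V

section Inhab2
variable {V : Type} [Inhabited V]

/-- The edge relation `(L,X,Y) → (L',X',Y')` between distinct rails. -/
def RailStep (G : V → V → Prop) {k : ℕ} (r r' : RailT V k) : Prop :=
  r ≠ r' ∧
  (∀ i, ∃ W : List V, IsPath G W ∧ W.head! = (r.1 i).head! ∧
    W.getLast! = (r'.1 i).getLast! ∧
    (∀ v, v ∈ W ↔ v ∈ r.1 i ∨ v ∈ r'.1 i) ∧
    (∀ u v, PEdge W u v ↔ PEdge (r.1 i) u v ∨ PEdge (r'.1 i) u v)) ∧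
  (∀ i, ∀ v ∈ r'.1 i, v ∈ r.1 i ∨ v ∈ r.2.1) ∧
  (∀ i, ∀ v ∈ r.1 i, v ∈ r'.1 i ∨ v ∈ r'.2.2) ∧
  r'.2.1 ⊆ r.2.1 ∧ r.2.2 ⊆ r'.2.2

/-- A path from `s₀` to `t₀` in the `(k,m,c)`-tracker, recorded by its list of
intermediate rail vertices. -/
def IsTrackerPath (G : V → V → Prop) {k : ℕ} (s t : Fin k → V) (m c : ℕ)
    (rs : List (RailT V k)) : Prop :=
  rs ≠ [] ∧ rs.Nodup ∧ rs.Chain' (RailStep G) ∧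
  (∀ r ∈ rs, IsRail G s t m c r.1 r.2.1 r.2.2) ∧
  (∀ r ∈ rs.head?, ∀ j, (r.1 j).head! = s j) ∧
  (∀ r ∈ rs.getLast?, ∀ j, (r.1 j).getLast! = t j)

end Inhab2

/-- A tracker path traces the linkage `P`: each `P j` is the union (as a digraph) of the
`j`-th members of the rails of the path. -/
def Traces {V : Type} {k : ℕ} (rs : List (RailT V k)) (P : Fin k → List V) : Prop :=
  ∀ j, (∀ v, v ∈ P j ↔ ∃ r ∈ rs, v ∈ r.1 j) ∧
       (∀ u v, PEdge (P j) u v ↔ ∃ r ∈ rs, PEdge (r.1 j) u v)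

section Dec
variable {V : Type} [DecidableEq V]

/-- `V(L)`, the set of vertices of the linkage `L`, as a finset. -/
def LV {k : ℕ} (L : Fin k → List V) : Finset V :=
  Finset.univ.biUnion fun i => (L i).toFinset

/-- `B` is acceptable for the linkage `L` (with parameters `d, k`). -/
def Acceptable [Inhabited V] (G : V → V → Prop) (d k : ℕ) (L : Fin k → List V)
    (B : Finset V) : Prop :=
  (∀ j : Fin k, ∀ u v : V, PEdge (L j) u v → v ∈ B → u ∈ B) ∧
  ∀ i j : Fin k, ¬ ∃ M : Fin ((k-1)*d + k^2 + 2) → List V,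
    IsPlanarMatching G ((L i).filter (· ∈ B)) ((L j).filter (· ∉ B)) M ∧
    InternallyDisjointFrom M L

/-- Labels along a tracker path, after the first rail: consecutive rails `r, r'`
contribute `|V(M'_j) ∖ V(M_j)|` in coordinate `j`. -/
def labelFrom {k : ℕ} : RailT V k → List (RailT V k) → (Fin k → ℕ)
  | _, [] => fun _ => 0
  | r, r' :: rest => (fun j => ((r'.1 j).toFinset \ (r.1 j).toFinset).card) + labelFrom r' rest

/-- The total label `l(P)` of a tracker path with rail list `rs`: the edge from `s₀`
contributes `|V(M_j)|`, each rail-to-rail edge contributes the difference counts, and the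
edge to `t₀` contributes `0`. -/
def pathLabel {k : ℕ} : List (RailT V k) → (Fin k → ℕ)
  | [] => fun _ => 0
  | r :: rest => (fun j => (r.1 j).toFinset.card) + labelFrom r rest

/-- `Q_{p,j}`: the maximal subpath of `P` with at most `m` vertices whose last vertex is
the last vertex of `P` among `v_1, …, v_p` (null if there is none). -/
def Qseg (m : ℕ) (e : List V) (p : ℕ) (P : List V) : List V :=
  (P.filter (· ∈ e.take p)).drop ((P.filter (· ∈ e.take p)).length - m)

/-- `R_{p,j}`: the maximal subpath of `P` with at most `m` vertices whose first vertex is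
the first vertex of `P` among `v_{p+1}, …, v_n` (null if there is none). -/
def Rseg (m : ℕ) (e : List V) (p : ℕ) (P : List V) : List V :=
  (P.filter (· ∈ e.drop p)).take m

/-- `M_{p,j} = Q_{p,j} ∪ R_{p,j}` (together with the connecting edge of `P` when both
are non-null). -/
def Mseg (m : ℕ) (e : List V) (p : ℕ) (P : List V) : List V :=
  Qseg m e p P ++ Rseg m e p P

end Dec

section AuxHelpers
variable {V : Type}

lemma aux_infix_cons {l₁ l₂ : List V} {a : V} (h : l₁ <:+: l₂) : l₁ <:+: a :: l₂ := by
  obtain ⟨s, t, rfl⟩ := h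
  exact ⟨a :: s, t, rfl⟩

lemma aux_head_closed (p : V → Bool) :
    ∀ (a : V) (tl : List V),
      (∀ u v : V, [u, v] <:+: (a :: tl) → p v = true → p u = true) →
      ∀ x ∈ a :: tl, p x = true → p a = true := by
  intro a tl
  induction tl generalizing a with
  | nil =>
    intro _ x hx hp
    rw [List.mem_singleton] at hx
    subst hx; exact hp
  | cons b tl ih =>
    intro hcl x hx hp
    rcases List.mem_cons.1 hx with rfl | hx'
    · exact hp
    · have hb : p b = true :=
        ih b (fun u v huv => hcl u v (aux_infix_cons huv)) x hx' hp
      exact hcl a b ⟨[], tl, rfl⟩ hb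

lemma aux_filter_prefix_suffix (p : V → Bool) :
    ∀ l : List V, (∀ u v : V, [u, v] <:+: l → p v = true → p u = true) →
      l.filter p <+: l ∧ l.filter (fun x => !(p x)) <:+ l := by
  intro l
  induction l with
  | nil => intro _; simp
  | cons a tl ih =>
    intro hcl
    obtain ⟨h1, h2⟩ := ih (fun u v huv => hcl u v (aux_infix_cons huv))
    by_cases hpa : p a = true
    · constructor
      · obtain ⟨u, hu⟩ := h1
        exact ⟨u, by simp [List.filter_cons, hpa, hu]⟩
      · have heq : (a :: tl).filter (fun x => !(p x)) = tl.filter (fun x => !(p x)) := by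
          simp [List.filter_cons, hpa]
        rw [heq]
        exact h2.trans (List.suffix_cons a tl)
    · have hnil : tl.filter p = [] := by
        rw [List.filter_eq_nil_iff]
        intro x hx hpx
        exact hpa (aux_head_closed p a tl hcl x (List.mem_cons_of_mem a hx) hpx)
      have hself : tl.filter (fun x => !(p x)) = tl := by
        rw [List.filter_eq_self]
        intro x hx
        have hnp : ¬ p x = true := fun hpx =>
          hpa (aux_head_closed p a tl hcl x (List.mem_cons_of_mem a hx) hpx)
        simp [hnp]
      constructor
      · have heq : (a :: tl).filter p = [] := by simp [List.filter_cons, hpa, hnil]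
        rw [heq]; exact List.nil_prefix
      · have heq : (a :: tl).filter (fun x => !(p x)) = a :: tl := by
          simp [List.filter_cons, hpa, hself]
        rw [heq]

lemma aux_infix_getElem {W l : List V} (h : W <:+: l) :
    ∃ o, o + W.length ≤ l.length ∧
      ∀ (i : ℕ) (hi : i < W.length) (h2 : o + i < l.length), W[i] = l[o + i]'h2 := by
  obtain ⟨s, u, rfl⟩ := h
  refine ⟨s.length, by simp only [List.length_append]; omega, fun i hi h2 => ?_⟩
  have hW : ((s ++ W ++ u).drop s.length).take W.length = W := by
    rw [List.append_assoc, List.drop_left, List.take_left]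
  have hlen1 : i < (((s ++ W ++ u).drop s.length).take W.length).length := by
    rw [hW]; exact hi
  have hlen2 : i < ((s ++ W ++ u).drop s.length).length := by
    simp only [List.length_drop, List.length_append]; omega
  calc W[i] = (((s ++ W ++ u).drop s.length).take W.length)[i]'hlen1 := by
        congr 1; exact hW.symm
    _ = ((s ++ W ++ u).drop s.length)[i]'hlen2 := List.getElem_take
    _ = (s ++ W ++ u)[s.length + i]'h2 := List.getElem_drop

lemma aux_minimal_infix {G : V → V → Prop} {l W : List V} (hm : IsMinimal G l)
    (h : W <:+: l) : IsMinimal G W := by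
  obtain ⟨o, ho, hg⟩ := aux_infix_getElem h
  intro i j hGij
  have hi2 : o + (i : ℕ) < l.length := by omega
  have hj2 : o + (j : ℕ) < l.length := by omega
  have hmain := hm ⟨o + i, hi2⟩ ⟨o + j, hj2⟩ (by
    simp only [List.get_eq_getElem]
    rw [← hg i i.isLt hi2, ← hg j j.isLt hj2]
    simpa only [List.get_eq_getElem] using hGij)
  have h3 : o + (j : ℕ) ≤ o + (i : ℕ) + 1 := hmain
  omega

lemma aux_path_infix {G : V → V → Prop} {l W : List V} (hp : IsPath G l)
    (h : W <:+: l) (hne : W ≠ []) : IsPath G W :=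
  ⟨hne, List.Nodup.sublist h.sublist hp.2.1, hp.2.2.infix h⟩

lemma aux_block {G : V → V → Prop} {d : ℕ} (hdom : PathDominant d G) (hd : 1 ≤ d)
    {Q : List V} (hQp : IsPath G Q) (hQm : IsMinimal G Q)
    {c : ℕ} (hlen : Q.length = c * d) {j : ℕ} (hj : j < c) (v : V) :
    ∃ p : Fin Q.length, j * d ≤ (p : ℕ) ∧ (p : ℕ) < j * d + d ∧
      (v = Q.get p ∨ G v (Q.get p) ∨ G (Q.get p) v) := by
  have hsub : j * d + d ≤ Q.length := by
    rw [hlen]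
    calc j * d + d = (j + 1) * d := by ring
      _ ≤ c * d := Nat.mul_le_mul_right d hj
  set W := (Q.drop (j * d)).take d with hW
  have hWlen : W.length = d := by
    simp only [hW, List.length_take, List.length_drop]; omega
  have hWinf : W <:+: Q :=
    (List.take_prefix _ _).isInfix.trans (List.drop_suffix _ _).isInfix
  have hWne : W ≠ [] := by
    intro hWnil; rw [hWnil] at hWlen; simp only [List.length_nil] at hWlen; omega
  have hthree := hdom W (aux_path_infix hQp hWinf hWne) (aux_minimal_infix hQm hWinf) hWlen v
  have key : ∃ w ∈ W, (v = w ∨ G v w ∨ G w v) := by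
    rcases hthree with hmem | ⟨w, hw, hG⟩ | ⟨w, hw, hG⟩
    · exact ⟨v, hmem, Or.inl rfl⟩
    · exact ⟨w, hw, Or.inr (Or.inl hG)⟩
    · exact ⟨w, hw, Or.inr (Or.inr hG)⟩
  obtain ⟨w, hw, hcase⟩ := key
  obtain ⟨q, hq, rfl⟩ := List.mem_iff_getElem.1 hw
  have hqd : q < d := by rw [hWlen] at hq; exact hq
  have hEq : W[q] = Q[j * d + q]'(by omega) := by
    calc W[q] = ((Q.drop (j * d)).take d)[q] := rfl
      _ = (Q.drop (j * d))[q]'(by simp only [List.length_drop]; omega) := List.getElem_take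
      _ = Q[j * d + q]'(by omega) := List.getElem_drop
  refine ⟨⟨j * d + q, by omega⟩, ?_, ?_, ?_⟩
  · show j * d ≤ j * d + q; omega
  · show j * d + q < j * d + d; omega
  · simp only [List.get_eq_getElem]
    rw [← hEq]
    exact hcase

section AuxInhab
variable [Inhabited V]

lemma aux_getLast!_eq (l : List V) (h : l ≠ []) : l.getLast! = l.getLast h := by
  cases l with
  | nil => exact absurd rfl h
  | cons a u => rfl

lemma aux_head!_append (l₁ l₂ : List V) (h : l₁ ≠ []) : (l₁ ++ l₂).head! = l₁.head! := by
  cases l₁ with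
  | nil => exact absurd rfl h
  | cons a u => rfl

lemma aux_head!_take (l : List V) (n : ℕ) (hn : 0 < n) : (l.take n).head! = l.head! := by
  cases l with
  | nil => rw [List.take_nil]
  | cons a tl =>
    obtain ⟨m, rfl⟩ : ∃ m, n = m + 1 := ⟨n - 1, by omega⟩
    rw [List.take_succ_cons]
    rfl

lemma aux_getLast!_append (l₁ l₂ : List V) (h : l₂ ≠ []) :
    (l₁ ++ l₂).getLast! = l₂.getLast! := by
  have hne : l₁ ++ l₂ ≠ [] := by
    intro hnil
    rcases List.append_eq_nil_iff.1 hnil with ⟨-, h2⟩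
    exact h h2
  rw [aux_getLast!_eq _ hne, aux_getLast!_eq _ h, List.getLast_append]
  rw [dif_neg]
  simp [h]

lemma aux_getLast!_drop (l : List V) (n : ℕ) (h : l.drop n ≠ []) :
    (l.drop n).getLast! = l.getLast! := by
  conv_rhs => rw [← List.take_append_drop n l]
  rw [aux_getLast!_append _ _ h]

lemma aux_key_minimal {G : V → V → Prop} {k : ℕ} {s t : Fin k → V} {x : Fin k → ℕ}
    (hx : IsKeyQuality G s t x) {L : Fin k → List V}
    (hL : IsLinkageFor G s t L) (hLx : ∀ i, (L i).length = x i) (j : Fin k) :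
    IsMinimal G (L j) := by
  classical
  by_contra hmin
  rw [IsMinimal] at hmin
  push_neg at hmin
  obtain ⟨a, b, hG, hab⟩ := hmin
  have hpl : IsPath G (L j) := hL.1.1 j
  have hal : (a : ℕ) < (L j).length := a.isLt
  have hbl : (b : ℕ) < (L j).length := b.isLt
  set W := (L j).take ((a : ℕ) + 1) ++ (L j).drop (b : ℕ) with hW
  have hWsub : W <+ (L j) := by
    conv_rhs => rw [← List.take_append_drop ((a : ℕ) + 1) (L j)]
    refine List.Sublist.append (List.Sublist.refl _) ?_
    have hdd : (L j).drop (b : ℕ) = ((L j).drop ((a : ℕ) + 1)).drop ((b : ℕ) - ((a : ℕ) + 1)) := by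
      rw [List.drop_drop]
      congr 1
      omega
    rw [hdd]
    exact (List.drop_suffix _ _).sublist
  have hWlen : W.length = ((a : ℕ) + 1) + ((L j).length - (b : ℕ)) := by
    simp only [hW, List.length_append, List.length_take, List.length_drop]
    omega
  have hWlt : W.length < (L j).length := by omega
  have hWne : W ≠ [] := by
    intro hnil
    have := congrArg List.length hnil
    rw [hWlen] at this
    simp at this
  have htake_ne : (L j).take ((a : ℕ) + 1) ≠ [] := by
    intro hnil
    have := congrArg List.length hnil
    simp only [List.length_take, List.length_nil] at this
    omega
  have hdrop_ne : (L j).drop (b : ℕ) ≠ [] := by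
    intro hnil
    have := congrArg List.length hnil
    simp only [List.length_drop, List.length_nil] at this
    omega
  have hlast : ((L j).take ((a : ℕ) + 1)).getLast? = some ((L j).get a) := by
    rw [List.getLast?_eq_getLast htake_ne, List.getLast_eq_getElem]
    have hidx : ((L j).take ((a : ℕ) + 1)).length - 1 = (a : ℕ) := by
      simp only [List.length_take]; omega
    simp only [hidx, List.getElem_take, List.get_eq_getElem]
  have hhead : ((L j).drop (b : ℕ)).head? = some ((L j).get b) := by
    rw [List.head?_drop, List.getElem?_eq_getElem hbl]
    simp [List.get_eq_getElem]
  have hWchain : W.Chain' G := by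
    change List.IsChain G W
    rw [hW, List.isChain_append]
    refine ⟨hpl.2.2.infix (List.take_prefix _ _).isInfix,
           hpl.2.2.infix (List.drop_suffix _ _).isInfix, ?_⟩
    intro p hp q hq
    rw [hlast] at hp
    rw [hhead] at hq
    rw [Option.mem_some_iff] at hp hq
    rw [← hp, ← hq]
    exact hG
  have hWpath : IsPath G W := ⟨hWne, List.Nodup.sublist hWsub hpl.2.1, hWchain⟩
  have hWhead : W.head! = (L j).head! := by
    rw [hW, aux_head!_append _ _ htake_ne]
    exact aux_head!_take (L j) _ (Nat.succ_pos _)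
  have hWlast : W.getLast! = (L j).getLast! := by
    rw [hW, aux_getLast!_append _ _ hdrop_ne, aux_getLast!_drop _ _ hdrop_ne]
  set L' := Function.update L j W with hL'
  have hmemL' : ∀ g, ∀ v : V, v ∈ L' g → v ∈ L g := by
    intro g v hv
    by_cases hgj : g = j
    · subst hgj
      rw [hL', Function.update_self] at hv
      exact hWsub.subset hv
    · rwa [hL', Function.update_of_ne hgj] at hv
  have hq : IsQuality G s t (Function.update x j W.length) := by
    refine ⟨L', ⟨⟨?_, ?_⟩, ?_⟩, ?_⟩
    · intro g
      by_cases hgj : g = j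
      · subst hgj; rw [hL', Function.update_self]; exact hWpath
      · rw [hL', Function.update_of_ne hgj]; exact hL.1.1 g
    · intro g g' hgg' v hv
      exact fun hv' => hL.1.2 g g' hgg' v (hmemL' g v hv) (hmemL' g' v hv')
    · intro g
      by_cases hgj : g = j
      · rw [hgj, hL', Function.update_self]
        exact ⟨hWhead.trans (hL.2 j).1, hWlast.trans (hL.2 j).2⟩
      · rw [hL', Function.update_of_ne hgj]; exact hL.2 g
    · intro g
      by_cases hgj : g = j
      · rw [hgj, hL', Function.update_self, Function.update_self]
      · rw [hL', Function.update_of_ne hgj, Function.update_of_ne hgj]; exact hLx g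
  refine hx.2 ⟨Function.update x j W.length, hq, ?_, ?_⟩
  · rw [Pi.le_def]
    intro g
    by_cases hgj : g = j
    · rw [hgj, Function.update_self, ← hLx j]
      exact hWlt.le
    · rw [Function.update_of_ne hgj]
  · intro hEq
    have hcf := congrFun hEq j
    rw [Function.update_self] at hcf
    rw [← hLx j] at hcf
    omega

lemma aux_build_contra {G : V → V → Prop} {k c : ℕ}
    {L : Fin k → List V} {FQ FR : List V}
    (hno : ¬ ∃ M : Fin c → List V, IsPlanarMatching G FQ FR M ∧ InternallyDisjointFrom M L)
    (M : Fin c → List V)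
    (hpath : ∀ j, IsPath G (M j))
    (hlen : ∀ j, (M j).length = 2 ∨ (M j).length = 3)
    (hdisj : ∀ j j' : Fin c, j ≠ j' → ∀ v, v ∈ M j → v ∉ M j')
    (hheads : (List.ofFn fun j => (M j).head!).Sublist FQ)
    (htails : (List.ofFn fun j => (M j).getLast!).Sublist FR)
    (hint : ∀ j : Fin c, ∀ v ∈ M j, v ≠ (M j).head! → v ≠ (M j).getLast! → ∀ g, v ∉ L g) :
    False := by
  apply hno
  refine ⟨M, ⟨⟨hpath, hdisj⟩, hlen, hheads, htails⟩, ?_⟩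
  rintro v ⟨⟨j, hvj⟩, hends⟩ g
  exact hint j v hvj (hends j).1 (hends j).2 g

end AuxInhab
end AuxHelpers

section AuxMore
variable {V : Type}

lemma aux_nodup2 {a b : V} (h1 : a ≠ b) : ([a, b] : List V).Nodup := by simp [h1]

lemma aux_nodup3 {a b c : V} (h1 : a ≠ b) (h2 : a ≠ c) (h3 : b ≠ c) :
    ([a, b, c] : List V).Nodup := by simp [h1, h2, h3]

lemma aux_chain3 {G : V → V → Prop} {a b c : V} (h1 : G a b) (h2 : G b c) :
    ([a, b, c] : List V).Chain' G := by
  change List.IsChain G [a, b, c]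
  rw [List.isChain_cons_cons, List.isChain_pair]
  exact ⟨h1, h2⟩

lemma aux_ofFn_get_sublist {c : ℕ} (Z : List V) (pz : Fin c → Fin Z.length)
    (hmono : ∀ j j' : Fin c, j < j' → (pz j : ℕ) < (pz j' : ℕ)) :
    (List.ofFn fun j => Z.get (pz j)) <+ Z := by
  have hmap : (List.ofFn fun j => Z.get (pz j)) = List.map Z.get (List.ofFn pz) := by
    rw [List.map_ofFn]; rfl
  rw [hmap]
  apply List.map_getElem_sublist
  rw [List.pairwise_ofFn]
  intro j j' hjj'
  exact hmono j j' hjj'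

end AuxMore

theorem stmt10 {V : Type} [Fintype V] [DecidableEq V] [Inhabited V]
    (G : V → V → Prop) (hG : Irreflexive G)
    (d k : ℕ) (hd : 1 ≤ d) (hk : 1 ≤ k) (hdom : PathDominant d G)
    (s t : Fin k → V) (x : Fin k → ℕ) (hx : IsKeyQuality G s t x)
    (L : Fin k → List V) (hL : IsLinkageFor G s t L) (hLx : ∀ i, (L i).length = x i)
    (c : ℕ) (hc : c = (k-1)*d + k^2 + 2)
    (B : Finset V) (hBsub : B ⊆ LV L) (hB : Acceptable G d k L B)
    (h i : Fin k) (Q R : List V)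
    (hQ : Q <:+: (L h).filter (· ∈ B)) (hQlen : Q.length = c * d)
    (hR : R <:+: (L i).filter (· ∉ B)) (hRlen : R.length = c * d) :
    {v : V | (Outward G Q v ∧ Inward G R v) ∧ ∀ g, v ∉ L g}.ncard ≤ c - 1 ∧
    (∀ g : Fin k,
      {v : V | (Outward G Q v ∧ Inward G R v) ∧ v ∈ (L g).filter (· ∈ B)}.ncard ≤ c - 1 ∧
      {v : V | (Outward G Q v ∧ Inward G R v) ∧ v ∈ (L g).filter (· ∉ B)}.ncard ≤ c - 1) ∧
    {v : V | Outward G Q v ∧ Inward G R v}.ncard ≤ (2*k+1) * (c-1) := by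
    classical
  have hc2 : 2 ≤ c := by rw [hc]; exact Nat.le_add_left 2 _
  have hcd : 0 < c * d := Nat.mul_pos (by omega) hd
  have hminh : IsMinimal G (L h) := aux_key_minimal hx hL hLx h
  have hmini : IsMinimal G (L i) := aux_key_minimal hx hL hLx i
  have hclosure : ∀ g : Fin k, ∀ u v : V, [u, v] <:+: L g →
      decide (v ∈ B) = true → decide (u ∈ B) = true := by
    intro g u v huv hv
    exact decide_eq_true (hB.1 g u v huv (of_decide_eq_true hv))
  have hfBpre : ∀ g : Fin k, (L g).filter (· ∈ B) <+: L g := fun g =>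
    (aux_filter_prefix_suffix _ (L g) (hclosure g)).1
  have hfAsuf : ∀ g : Fin k, (L g).filter (· ∉ B) <:+ L g := by
    intro g
    have h2 := (aux_filter_prefix_suffix (fun v => decide (v ∈ B)) (L g) (hclosure g)).2
    have heq : (L g).filter (· ∉ B) = (L g).filter (fun x => !(decide (x ∈ B))) :=
      List.filter_congr (fun x _ => decide_not)
    rw [heq]
    exact h2
  have hQinfL : Q <:+: L h := hQ.trans (hfBpre h).isInfix
  have hRinfL : R <:+: L i := hR.trans (hfAsuf i).isInfix
  have hQne : Q ≠ [] := by
    intro hnil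
    rw [hnil] at hQlen
    simp only [List.length_nil] at hQlen
    exact absurd hQlen.symm (Nat.pos_iff_ne_zero.1 hcd)
  have hRne : R ≠ [] := by
    intro hnil
    rw [hnil] at hRlen
    simp only [List.length_nil] at hRlen
    exact absurd hRlen.symm (Nat.pos_iff_ne_zero.1 hcd)
  have hQpath : IsPath G Q := aux_path_infix (hL.1.1 h) hQinfL hQne
  have hQmin : IsMinimal G Q := aux_minimal_infix hminh hQinfL
  have hRpath : IsPath G R := aux_path_infix (hL.1.1 i) hRinfL hRne
  have hRmin : IsMinimal G R := aux_minimal_infix hmini hRinfL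
  have hQB : ∀ w ∈ Q, w ∈ B := fun w hw =>
    of_decide_eq_true (List.mem_filter.1 (hQ.sublist.subset hw)).2
  have hRnB : ∀ w ∈ R, w ∉ B := fun w hw =>
    of_decide_eq_true (List.mem_filter.1 (hR.sublist.subset hw)).2
  have hQL : ∀ w ∈ Q, w ∈ L h := fun w hw => hQinfL.sublist.subset hw
  have hRL : ∀ w ∈ R, w ∈ L i := fun w hw => hRinfL.sublist.subset hw
  have hQsel : ∀ v : V, Outward G Q v → ∀ j : Fin c, ∃ p : Fin Q.length,
      (j : ℕ) * d ≤ (p : ℕ) ∧ (p : ℕ) < (j : ℕ) * d + d ∧ G (Q.get p) v := by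
    intro v hv j
    obtain ⟨p, h1, h2, hcase⟩ := aux_block hdom hd hQpath hQmin hQlen j.isLt v
    rcases hcase with rfl | hG | hG
    · exact absurd (Q.get_mem p) hv.1
    · exact absurd hG (hv.2 _ (Q.get_mem p))
    · exact ⟨p, h1, h2, hG⟩
  have hRsel : ∀ v : V, Inward G R v → ∀ j : Fin c, ∃ p : Fin R.length,
      (j : ℕ) * d ≤ (p : ℕ) ∧ (p : ℕ) < (j : ℕ) * d + d ∧ G v (R.get p) := by
    intro v hv j
    obtain ⟨p, h1, h2, hcase⟩ := aux_block hdom hd hRpath hRmin hRlen j.isLt v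
    rcases hcase with rfl | hG | hG
    · exact absurd (R.get_mem p) hv.1
    · exact ⟨p, h1, h2, hG⟩
    · exact absurd hG (hv.2 _ (R.get_mem p))
  have hofFnBlocks : ∀ (Z : List V) (pz : Fin c → Fin Z.length),
      (∀ j : Fin c, (j : ℕ) * d ≤ pz j ∧ (pz j : ℕ) < (j : ℕ) * d + d) →
      (List.ofFn fun j => Z.get (pz j)) <+ Z := by
    intro Z pz hpz
    apply aux_ofFn_get_sublist
    intro j j' hjj'
    have h1 := (hpz j).2
    have h2 := (hpz j').1
    have h0 : (j : ℕ) < (j' : ℕ) := hjj'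
    have h3 : ((j : ℕ) + 1) * d ≤ (j' : ℕ) * d :=
      Nat.mul_le_mul_right d (Nat.succ_le_of_lt h0)
    have h4 : ((j : ℕ) + 1) * d = (j : ℕ) * d + d := by ring
    omega
  have hblock_inj : ∀ (Z : List V), Z.Nodup → ∀ (pz : Fin c → Fin Z.length),
      (∀ j : Fin c, (j : ℕ) * d ≤ pz j ∧ (pz j : ℕ) < (j : ℕ) * d + d) →
      ∀ j j' : Fin c, j ≠ j' → Z.get (pz j) ≠ Z.get (pz j') := by
    intro Z hnd pz hpz j j' hne hEq
    have hp : pz j = pz j' := (List.Nodup.get_inj_iff hnd).1 hEq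
    have hv : (pz j : ℕ) = (pz j' : ℕ) := congrArg Fin.val hp
    have h1 := (hpz j).1
    have h2 := (hpz j).2
    have h3 := (hpz j').1
    have h4 := (hpz j').2
    have e1 : (pz j : ℕ) / d = (j : ℕ) := Nat.div_eq_of_lt_le h1 (by
      have h5 : ((j : ℕ) + 1) * d = (j : ℕ) * d + d := by ring
      omega)
    have e2 : (pz j : ℕ) / d = (j' : ℕ) := Nat.div_eq_of_lt_le (by omega) (by
      have h5 : ((j' : ℕ) + 1) * d = (j' : ℕ) * d + d := by ring
      omega)
    exact hne (Fin.ext (by omega))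
  have hextract : ∀ S : Set V, ¬ S.ncard ≤ c - 1 → ∃ f : Fin c → V,
      (∀ j j' : Fin c, j ≠ j' → f j ≠ f j') ∧ ∀ j, f j ∈ S := by
    intro S hS
    have hfin : S.Finite := Set.toFinite S
    have hcard : c ≤ hfin.toFinset.card := by
      rw [← Set.ncard_eq_toFinset_card S hfin]
      omega
    have hlen : hfin.toFinset.toList.length = hfin.toFinset.card :=
      Finset.length_toList _
    have hnd : hfin.toFinset.toList.Nodup := Finset.nodup_toList _
    refine ⟨fun j => hfin.toFinset.toList.get ⟨(j : ℕ), by omega⟩, ?_, ?_⟩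
    · intro j j' hne hEq
      have hp := (List.Nodup.get_inj_iff hnd).1 hEq
      have hv2 := congrArg Fin.val hp
      exact hne (Fin.ext hv2)
    · intro j
      have hm : hfin.toFinset.toList.get ⟨(j : ℕ), by omega⟩ ∈ hfin.toFinset.toList :=
        List.get_mem _ _
      rw [Finset.mem_toList, Set.Finite.mem_toFinset] at hm
      exact hm
  have hnoQ : ∀ a b : Fin k, ¬ ∃ M : Fin c → List V,
      IsPlanarMatching G ((L a).filter (· ∈ B)) ((L b).filter (· ∉ B)) M ∧
      InternallyDisjointFrom M L := by
    intro a b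
    have hab := hB.2 a b
    rwa [← hc] at hab
  -- Bound 1 : X ∖ V(L)
  have hb1 : {v : V | (Outward G Q v ∧ Inward G R v) ∧ ∀ g, v ∉ L g}.ncard ≤ c - 1 := by
    by_contra hS
    obtain ⟨f, hfinj, hfS⟩ := hextract _ hS
    have hfOut : ∀ j : Fin c, Outward G Q (f j) := fun j => (hfS j).1.1
    have hfIn : ∀ j : Fin c, Inward G R (f j) := fun j => (hfS j).1.2
    have hfnL : ∀ (j : Fin c) (g : Fin k), f j ∉ L g := fun j => (hfS j).2
    choose pq hpq1 hpq2 hpqG using fun j : Fin c => hQsel (f j) (hfOut j) j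
    choose pr hpr1 hpr2 hprG using fun j : Fin c => hRsel (f j) (hfIn j) j
    have hpqb : ∀ j : Fin c, (j : ℕ) * d ≤ pq j ∧ (pq j : ℕ) < (j : ℕ) * d + d :=
      fun j => ⟨hpq1 j, hpq2 j⟩
    have hprb : ∀ j : Fin c, (j : ℕ) * d ≤ pr j ∧ (pr j : ℕ) < (j : ℕ) * d + d :=
      fun j => ⟨hpr1 j, hpr2 j⟩
    have hqmem : ∀ j : Fin c, Q.get (pq j) ∈ Q := fun j => Q.get_mem _
    have hrmem : ∀ j : Fin c, R.get (pr j) ∈ R := fun j => R.get_mem _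
    have hqB' : ∀ j, Q.get (pq j) ∈ B := fun j => hQB _ (hqmem j)
    have hrB' : ∀ j, R.get (pr j) ∉ B := fun j => hRnB _ (hrmem j)
    have hqv : ∀ j j' : Fin c, Q.get (pq j) ≠ f j' := fun j j' hEq =>
      hfnL j' h (hEq ▸ hQL _ (hqmem j))
    have hrv : ∀ j j' : Fin c, R.get (pr j) ≠ f j' := fun j j' hEq =>
      hfnL j' i (hEq ▸ hRL _ (hrmem j))
    have hqr : ∀ j j' : Fin c, Q.get (pq j) ≠ R.get (pr j') := fun j j' hEq =>
      hrB' j' (hEq ▸ hqB' j)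
    have hqq := hblock_inj Q hQpath.2.1 pq hpqb
    have hrr := hblock_inj R hRpath.2.1 pr hprb
    refine aux_build_contra (hnoQ h i)
      (fun j => [Q.get (pq j), f j, R.get (pr j)]) ?_ ?_ ?_ ?_ ?_ ?_
    · intro j
      exact ⟨List.cons_ne_nil _ _,
        aux_nodup3 (hqv j j) (hqr j j) (Ne.symm (hrv j j)),
        aux_chain3 (hpqG j) (hprG j)⟩
    · intro j
      exact Or.inr rfl
    · intro j j' hne v hv hv'
      simp only [List.mem_cons, List.mem_singleton, List.not_mem_nil, or_false] at hv hv'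
      rcases hv with rfl | rfl | rfl
      · rcases hv' with hEq | hEq | hEq
        · exact hqq j j' hne hEq
        · exact hqv j j' hEq
        · exact hqr j j' hEq
      · rcases hv' with hEq | hEq | hEq
        · exact hqv j' j hEq.symm
        · exact hfinj j j' hne hEq
        · exact hrv j' j hEq.symm
      · rcases hv' with hEq | hEq | hEq
        · exact hqr j' j hEq.symm
        · exact hrv j j' hEq
        · exact hrr j j' hne hEq
    · have hEqh : (List.ofFn fun j : Fin c =>
          ([Q.get (pq j), f j, R.get (pr j)] : List V).head!) =
          List.ofFn fun j : Fin c => Q.get (pq j) :=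
        congrArg List.ofFn (funext fun j => rfl)
      rw [hEqh]
      exact (hofFnBlocks Q pq hpqb).trans hQ.sublist
    · have hEqt : (List.ofFn fun j : Fin c =>
          ([Q.get (pq j), f j, R.get (pr j)] : List V).getLast!) =
          List.ofFn fun j : Fin c => R.get (pr j) :=
        congrArg List.ofFn (funext fun j => rfl)
      rw [hEqt]
      exact (hofFnBlocks R pr hprb).trans hR.sublist
    · intro j v hv hh ht
      simp only [List.mem_cons, List.mem_singleton, List.not_mem_nil, or_false] at hv
      rcases hv with rfl | rfl | rfl
      · exact absurd rfl hh
      · exact hfnL j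
      · exact absurd rfl ht
  -- Bound 2 : X ∩ V(P_g | B)
  have hb2 : ∀ g : Fin k,
      {v : V | (Outward G Q v ∧ Inward G R v) ∧ v ∈ (L g).filter (· ∈ B)}.ncard ≤ c - 1 := by
    intro g
    by_contra hS
    have hfinS : ({v : V | (Outward G Q v ∧ Inward G R v) ∧
        v ∈ (L g).filter (· ∈ B)} : Set V).Finite := Set.toFinite _
    have hFLnd : ((L g).filter (· ∈ B)).Nodup := List.Nodup.filter _ (hL.1.1 g).2.1
    have hvnd : (((L g).filter (· ∈ B)).filter (· ∈ hfinS.toFinset)).Nodup :=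
      List.Nodup.filter _ hFLnd
    have hsubset : hfinS.toFinset ⊆
        (((L g).filter (· ∈ B)).filter (· ∈ hfinS.toFinset)).toFinset := by
      intro w hw
      rw [List.mem_toFinset, List.mem_filter]
      have hw' := (Set.Finite.mem_toFinset hfinS).1 hw
      exact ⟨hw'.2, decide_eq_true hw⟩
    have hvlen : c ≤ (((L g).filter (· ∈ B)).filter (· ∈ hfinS.toFinset)).length := by
      have h1 := Finset.card_le_card hsubset
      have h2 := List.toFinset_card_of_nodup hvnd
      have h3 := Set.ncard_eq_toFinset_card _ hfinS
      omega
    have pf : ∀ j : Fin c,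
        (j : ℕ) < (((L g).filter (· ∈ B)).filter (· ∈ hfinS.toFinset)).length :=
      fun j => by omega
    set vlist := ((L g).filter (· ∈ B)).filter (· ∈ hfinS.toFinset) with hvl
    have hvmem : ∀ w ∈ vlist, w ∈
        {v : V | (Outward G Q v ∧ Inward G R v) ∧ v ∈ (L g).filter (· ∈ B)} := by
      intro w hw
      rw [hvl, List.mem_filter] at hw
      exact (Set.Finite.mem_toFinset hfinS).1 (of_decide_eq_true hw.2)
    have hfS : ∀ j : Fin c, vlist.get ⟨(j : ℕ), pf j⟩ ∈
        {v : V | (Outward G Q v ∧ Inward G R v) ∧ v ∈ (L g).filter (· ∈ B)} :=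
      fun j => hvmem _ (List.get_mem _ _)
    have hfFL : ∀ j : Fin c, vlist.get ⟨(j : ℕ), pf j⟩ ∈ (L g).filter (· ∈ B) :=
      fun j => (hfS j).2
    have hfB2 : ∀ j : Fin c, vlist.get ⟨(j : ℕ), pf j⟩ ∈ B :=
      fun j => of_decide_eq_true (List.mem_filter.1 (hfFL j)).2
    have hfIn : ∀ j : Fin c, Inward G R (vlist.get ⟨(j : ℕ), pf j⟩) :=
      fun j => (hfS j).1.2
    choose pr hpr1 hpr2 hprG using
      fun j : Fin c => hRsel (vlist.get ⟨(j : ℕ), pf j⟩) (hfIn j) j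
    have hprb : ∀ j : Fin c, (j : ℕ) * d ≤ pr j ∧ (pr j : ℕ) < (j : ℕ) * d + d :=
      fun j => ⟨hpr1 j, hpr2 j⟩
    have hfinj : ∀ j j' : Fin c, j ≠ j' →
        vlist.get ⟨(j : ℕ), pf j⟩ ≠ vlist.get ⟨(j' : ℕ), pf j'⟩ := by
      intro j j' hne hEq
      have hp := (List.Nodup.get_inj_iff hvnd).1 hEq
      have hv2 := congrArg Fin.val hp
      exact hne (Fin.ext hv2)
    have hrmem : ∀ j : Fin c, R.get (pr j) ∈ R := fun j => R.get_mem _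
    have hrB' : ∀ j, R.get (pr j) ∉ B := fun j => hRnB _ (hrmem j)
    have hfr : ∀ j j' : Fin c, vlist.get ⟨(j : ℕ), pf j⟩ ≠ R.get (pr j') :=
      fun j j' hEq => hrB' j' (hEq ▸ hfB2 j)
    have hrr := hblock_inj R hRpath.2.1 pr hprb
    refine aux_build_contra (hnoQ g i)
      (fun j => [vlist.get ⟨(j : ℕ), pf j⟩, R.get (pr j)]) ?_ ?_ ?_ ?_ ?_ ?_
    · intro j
      exact ⟨List.cons_ne_nil _ _, aux_nodup2 (hfr j j), List.isChain_pair.2 (hprG j)⟩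
    · intro j
      exact Or.inl rfl
    · intro j j' hne v hv hv'
      simp only [List.mem_cons, List.mem_singleton, List.not_mem_nil, or_false] at hv hv'
      rcases hv with rfl | rfl
      · rcases hv' with hEq | hEq
        · exact hfinj j j' hne hEq
        · exact hfr j j' hEq
      · rcases hv' with hEq | hEq
        · exact hfr j' j hEq.symm
        · exact hrr j j' hne hEq
    · have hEqh : (List.ofFn fun j : Fin c =>
          ([vlist.get ⟨(j : ℕ), pf j⟩, R.get (pr j)] : List V).head!) =
          List.ofFn fun j : Fin c => vlist.get ⟨(j : ℕ), pf j⟩ :=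
        congrArg List.ofFn (funext fun j => rfl)
      rw [hEqh]
      have hstep : (List.ofFn fun j : Fin c => vlist.get ⟨(j : ℕ), pf j⟩) <+ vlist := by
        apply aux_ofFn_get_sublist vlist (fun j => ⟨(j : ℕ), pf j⟩)
        intro j j' hjj'
        exact hjj'
      exact hstep.trans (List.filter_sublist)
    · have hEqt : (List.ofFn fun j : Fin c =>
          ([vlist.get ⟨(j : ℕ), pf j⟩, R.get (pr j)] : List V).getLast!) =
          List.ofFn fun j : Fin c => R.get (pr j) :=
        congrArg List.ofFn (funext fun j => rfl)
      rw [hEqt]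
      exact (hofFnBlocks R pr hprb).trans hR.sublist
    · intro j v hv hh ht
      simp only [List.mem_cons, List.mem_singleton, List.not_mem_nil, or_false] at hv
      rcases hv with rfl | rfl
      · exact absurd rfl hh
      · exact absurd rfl ht
  -- Bound 3 : X ∩ V(P_g | A)
  have hb3 : ∀ g : Fin k,
      {v : V | (Outward G Q v ∧ Inward G R v) ∧ v ∈ (L g).filter (· ∉ B)}.ncard ≤ c - 1 := by
    intro g
    by_contra hS
    have hfinS : ({v : V | (Outward G Q v ∧ Inward G R v) ∧
        v ∈ (L g).filter (· ∉ B)} : Set V).Finite := Set.toFinite _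
    have hFLnd : ((L g).filter (· ∉ B)).Nodup := List.Nodup.filter _ (hL.1.1 g).2.1
    have hvnd : (((L g).filter (· ∉ B)).filter (· ∈ hfinS.toFinset)).Nodup :=
      List.Nodup.filter _ hFLnd
    have hsubset : hfinS.toFinset ⊆
        (((L g).filter (· ∉ B)).filter (· ∈ hfinS.toFinset)).toFinset := by
      intro w hw
      rw [List.mem_toFinset, List.mem_filter]
      have hw' := (Set.Finite.mem_toFinset hfinS).1 hw
      exact ⟨hw'.2, decide_eq_true hw⟩
    have hvlen : c ≤ (((L g).filter (· ∉ B)).filter (· ∈ hfinS.toFinset)).length := by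
      have h1 := Finset.card_le_card hsubset
      have h2 := List.toFinset_card_of_nodup hvnd
      have h3 := Set.ncard_eq_toFinset_card _ hfinS
      omega
    have pf : ∀ j : Fin c,
        (j : ℕ) < (((L g).filter (· ∉ B)).filter (· ∈ hfinS.toFinset)).length :=
      fun j => by omega
    set vlist := ((L g).filter (· ∉ B)).filter (· ∈ hfinS.toFinset) with hvl
    have hvmem : ∀ w ∈ vlist, w ∈
        {v : V | (Outward G Q v ∧ Inward G R v) ∧ v ∈ (L g).filter (· ∉ B)} := by
      intro w hw
      rw [hvl, List.mem_filter] at hw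
      exact (Set.Finite.mem_toFinset hfinS).1 (of_decide_eq_true hw.2)
    have hfS : ∀ j : Fin c, vlist.get ⟨(j : ℕ), pf j⟩ ∈
        {v : V | (Outward G Q v ∧ Inward G R v) ∧ v ∈ (L g).filter (· ∉ B)} :=
      fun j => hvmem _ (List.get_mem _ _)
    have hfFL : ∀ j : Fin c, vlist.get ⟨(j : ℕ), pf j⟩ ∈ (L g).filter (· ∉ B) :=
      fun j => (hfS j).2
    have hfB2 : ∀ j : Fin c, vlist.get ⟨(j : ℕ), pf j⟩ ∉ B :=
      fun j => of_decide_eq_true (List.mem_filter.1 (hfFL j)).2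
    have hfOut : ∀ j : Fin c, Outward G Q (vlist.get ⟨(j : ℕ), pf j⟩) :=
      fun j => (hfS j).1.1
    choose pq hpq1 hpq2 hpqG using
      fun j : Fin c => hQsel (vlist.get ⟨(j : ℕ), pf j⟩) (hfOut j) j
    have hpqb : ∀ j : Fin c, (j : ℕ) * d ≤ pq j ∧ (pq j : ℕ) < (j : ℕ) * d + d :=
      fun j => ⟨hpq1 j, hpq2 j⟩
    have hfinj : ∀ j j' : Fin c, j ≠ j' →
        vlist.get ⟨(j : ℕ), pf j⟩ ≠ vlist.get ⟨(j' : ℕ), pf j'⟩ := by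
      intro j j' hne hEq
      have hp := (List.Nodup.get_inj_iff hvnd).1 hEq
      have hv2 := congrArg Fin.val hp
      exact hne (Fin.ext hv2)
    have hqmem : ∀ j : Fin c, Q.get (pq j) ∈ Q := fun j => Q.get_mem _
    have hqB' : ∀ j, Q.get (pq j) ∈ B := fun j => hQB _ (hqmem j)
    have hqf : ∀ j j' : Fin c, Q.get (pq j) ≠ vlist.get ⟨(j' : ℕ), pf j'⟩ :=
      fun j j' hEq => hfB2 j' (hEq ▸ hqB' j)
    have hqq := hblock_inj Q hQpath.2.1 pq hpqb
    refine aux_build_contra (hnoQ h g)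
      (fun j => [Q.get (pq j), vlist.get ⟨(j : ℕ), pf j⟩]) ?_ ?_ ?_ ?_ ?_ ?_
    · intro j
      exact ⟨List.cons_ne_nil _ _, aux_nodup2 (hqf j j), List.isChain_pair.2 (hpqG j)⟩
    · intro j
      exact Or.inl rfl
    · intro j j' hne v hv hv'
      simp only [List.mem_cons, List.mem_singleton, List.not_mem_nil, or_false] at hv hv'
      rcases hv with rfl | rfl
      · rcases hv' with hEq | hEq
        · exact hqq j j' hne hEq
        · exact hqf j j' hEq
      · rcases hv' with hEq | hEq
        · exact hqf j' j hEq.symm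
        · exact hfinj j j' hne hEq
    · have hEqh : (List.ofFn fun j : Fin c =>
          ([Q.get (pq j), vlist.get ⟨(j : ℕ), pf j⟩] : List V).head!) =
          List.ofFn fun j : Fin c => Q.get (pq j) :=
        congrArg List.ofFn (funext fun j => rfl)
      rw [hEqh]
      exact (hofFnBlocks Q pq hpqb).trans hQ.sublist
    · have hEqt : (List.ofFn fun j : Fin c =>
          ([Q.get (pq j), vlist.get ⟨(j : ℕ), pf j⟩] : List V).getLast!) =
          List.ofFn fun j : Fin c => vlist.get ⟨(j : ℕ), pf j⟩ :=
        congrArg List.ofFn (funext fun j => rfl)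
      rw [hEqt]
      have hstep : (List.ofFn fun j : Fin c => vlist.get ⟨(j : ℕ), pf j⟩) <+ vlist := by
        apply aux_ofFn_get_sublist vlist (fun j => ⟨(j : ℕ), pf j⟩)
        intro j j' hjj'
        exact hjj'
      exact hstep.trans (List.filter_sublist)
    · intro j v hv hh ht
      simp only [List.mem_cons, List.mem_singleton, List.not_mem_nil, or_false] at hv
      rcases hv with rfl | rfl
      · exact absurd rfl hh
      · exact absurd rfl ht
  refine ⟨hb1, fun g => ⟨hb2 g, hb3 g⟩, ?_⟩
  have hfinX : ({v : V | Outward G Q v ∧ Inward G R v} : Set V).Finite := Set.toFinite _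
  have hfin0 : ({v : V | (Outward G Q v ∧ Inward G R v) ∧ ∀ g, v ∉ L g} : Set V).Finite :=
    Set.toFinite _
  have hfinB : ∀ g : Fin k, ({v : V | (Outward G Q v ∧ Inward G R v) ∧
      v ∈ (L g).filter (· ∈ B)} : Set V).Finite := fun g => Set.toFinite _
  have hfinA : ∀ g : Fin k, ({v : V | (Outward G Q v ∧ Inward G R v) ∧
      v ∈ (L g).filter (· ∉ B)} : Set V).Finite := fun g => Set.toFinite _
  have hsub : hfinX.toFinset ⊆ hfin0.toFinset ∪
      Finset.univ.biUnion (fun g => (hfinB g).toFinset ∪ (hfinA g).toFinset) := by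
    intro v hv
    rw [Set.Finite.mem_toFinset] at hv
    by_cases hvL : ∀ g, v ∉ L g
    · exact Finset.mem_union_left _ ((Set.Finite.mem_toFinset _).2 ⟨hv, hvL⟩)
    · push_neg at hvL
      obtain ⟨g, hg⟩ := hvL
      refine Finset.mem_union_right _ (Finset.mem_biUnion.2 ⟨g, Finset.mem_univ g, ?_⟩)
      by_cases hvB : v ∈ B
      · exact Finset.mem_union_left _ ((Set.Finite.mem_toFinset _).2
          ⟨hv, List.mem_filter.2 ⟨hg, decide_eq_true hvB⟩⟩)
      · exact Finset.mem_union_right _ ((Set.Finite.mem_toFinset _).2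
          ⟨hv, List.mem_filter.2 ⟨hg, decide_eq_true hvB⟩⟩)
  calc {v : V | Outward G Q v ∧ Inward G R v}.ncard
      = hfinX.toFinset.card := Set.ncard_eq_toFinset_card _ hfinX
    _ ≤ (hfin0.toFinset ∪
        Finset.univ.biUnion (fun g => (hfinB g).toFinset ∪ (hfinA g).toFinset)).card :=
      Finset.card_le_card hsub
    _ ≤ hfin0.toFinset.card +
        (Finset.univ.biUnion (fun g => (hfinB g).toFinset ∪ (hfinA g).toFinset)).card :=
      Finset.card_union_le _ _
    _ ≤ (c - 1) + ∑ g : Fin k, ((hfinB g).toFinset ∪ (hfinA g).toFinset).card := by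
      have h1 : hfin0.toFinset.card ≤ c - 1 := by
        rw [← Set.ncard_eq_toFinset_card _ hfin0]
        exact hb1
      exact Nat.add_le_add h1 Finset.card_biUnion_le
    _ ≤ (c - 1) + ∑ _g : Fin k, ((c - 1) + (c - 1)) := by
      refine Nat.add_le_add_left (Finset.sum_le_sum ?_) _
      intro g _
      have h2 : (hfinB g).toFinset.card ≤ c - 1 := by
        rw [← Set.ncard_eq_toFinset_card _ (hfinB g)]
        exact hb2 g
      have h3 : (hfinA g).toFinset.card ≤ c - 1 := by
        rw [← Set.ncard_eq_toFinset_card _ (hfinA g)]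
        exact hb3 g
      calc ((hfinB g).toFinset ∪ (hfinA g).toFinset).card
          ≤ (hfinB g).toFinset.card + (hfinA g).toFinset.card := Finset.card_union_le _ _
        _ ≤ (c - 1) + (c - 1) := Nat.add_le_add h2 h3
    _ = (2 * k + 1) * (c - 1) := by
      rw [Finset.sum_const, Finset.card_univ, Fintype.card_fin, smul_eq_mul]
      ring
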